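/- arXiv:1611.07900 — 4 statements merged into one kernel-verified Lean document; each statement's English description precedes it below -/
import Mathlib

section
/- There exists x ∈ sl(n+1,ℂ) whose stabilizer under the conjugation action of K̃^ℂ is as small as possible; explicitly, let x be the elementary (n+1)×(n+1) Jordan block (entries x_{i,i+1} = 1 and all others 0). If B ∈ GL(n,ℂ) and the matrix g = blockdiag(B,(det B)⁻¹) satisfies g·x = x·g, then g is a scalar matrix: there exists α ∈ ℂ with α^{n+1} = 1 and g = α·I_{n+1}. Hence the stabilizer of x in K^ℂ = K̃^ℂ/Z is trivial, where Z = {α·I_{n+1} : α^{n+1} = 1}. -/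
open Matrix

noncomputable section

/-- The block diagonal matrix `blockdiag (B, (det B)⁻¹)` in `M_{n+1}(ℂ)`. -/
def gmat (n : ℕ) (B : Matrix (Fin n) (Fin n) ℂ) : Matrix (Fin (n + 1)) (Fin (n + 1)) ℂ :=
  Matrix.of fun i j =>
    if hi : (i : ℕ) < n then
      (if hj : (j : ℕ) < n then B ⟨i, hi⟩ ⟨j, hj⟩ else 0)
    else if (j : ℕ) < n then 0 else (B.det)⁻¹

/-- The elementary `N × N` Jordan block. -/
def jordan (N : ℕ) : Matrix (Fin N) (Fin N) ℂ :=
  Matrix.of fun i j => if (i : ℕ) + 1 = (j : ℕ) then 1 else 0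

lemma mulJ (N : ℕ) (g : Matrix (Fin N) (Fin N) ℂ) (i : Fin N) (b : ℕ) (hb : b + 1 < N) :
    (g * jordan N) i ⟨b+1, hb⟩ = g i ⟨b, Nat.lt_of_succ_lt hb⟩ := by
  rw [Matrix.mul_apply]
  rw [Finset.sum_eq_single (⟨b, Nat.lt_of_succ_lt hb⟩ : Fin N)]
  · simp [jordan]
  · intro k _ hk
    simp only [jordan, Matrix.of_apply]
    rw [if_neg, mul_zero]
    intro h
    exact hk (by apply Fin.ext; show (k : ℕ) = b; omega)
  · simp

lemma mulJ0 (N : ℕ) (g : Matrix (Fin N) (Fin N) ℂ) (i : Fin N) (h0 : 0 < N) :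
    (g * jordan N) i ⟨0, h0⟩ = 0 := by
  rw [Matrix.mul_apply]
  apply Finset.sum_eq_zero
  intro k _
  simp [jordan]

lemma Jmul (N : ℕ) (g : Matrix (Fin N) (Fin N) ℂ) (j : Fin N) (a : ℕ) (ha : a + 1 < N) :
    (jordan N * g) ⟨a, Nat.lt_of_succ_lt ha⟩ j = g ⟨a+1, ha⟩ j := by
  rw [Matrix.mul_apply]
  rw [Finset.sum_eq_single (⟨a+1, ha⟩ : Fin N)]
  · simp [jordan]
  · intro k _ hk
    simp only [jordan, Matrix.of_apply]
    rw [if_neg, zero_mul]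
    intro h
    exact hk (by apply Fin.ext; show (k : ℕ) = a + 1; omega)
  · simp

lemma Jmul_last (N : ℕ) (g : Matrix (Fin N) (Fin N) ℂ) (j : Fin N) (hN : 0 < N)
    (hl : N - 1 + 1 = N) :
    (jordan N * g) ⟨N-1, Nat.sub_lt hN one_pos⟩ j = 0 := by
  rw [Matrix.mul_apply]
  apply Finset.sum_eq_zero
  intro k _
  simp only [jordan, Matrix.of_apply, Fin.val_mk]
  rw [if_neg, zero_mul]
  have := k.isLt
  omega

/-- If `g = blockdiag (B, (det B)⁻¹)` commutes with the elementary
`(n+1) × (n+1)` Jordan block, then `g = α • I` for some `(n+1)`-st root of unity `α`;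
hence the stabilizer of the Jordan block in `K^ℂ = K̃^ℂ/Z` is trivial. -/
theorem statement12 (n : ℕ) (hn : 1 ≤ n) (B : GL (Fin n) ℂ)
    (hcomm : gmat n ↑B * jordan (n + 1) = jordan (n + 1) * gmat n ↑B) :
    ∃ α : ℂ, α ^ (n + 1) = 1 ∧
      gmat n ↑B = α • (1 : Matrix (Fin (n + 1)) (Fin (n + 1)) ℂ) := by
  set g : Matrix (Fin (n+1)) (Fin (n+1)) ℂ := gmat n ↑B with hg
  set α : ℂ := ((B : Matrix (Fin n) (Fin n) ℂ).det)⁻¹ with hα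
  -- entry facts from the commutation relation
  have shift : ∀ (a b : ℕ) (ha : a + 1 < n + 1) (hb : b + 1 < n + 1),
      g ⟨a+1, ha⟩ ⟨b+1, hb⟩ = g ⟨a, Nat.lt_of_succ_lt ha⟩ ⟨b, Nat.lt_of_succ_lt hb⟩ := by
    intro a b ha hb
    rw [← Jmul (n+1) g ⟨b+1, hb⟩ a ha, ← hcomm, mulJ (n+1) g _ b hb]
  have col0 : ∀ (a : ℕ) (ha : a + 1 < n + 1), g ⟨a+1, ha⟩ ⟨0, Nat.succ_pos n⟩ = 0 := by
    intro a ha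
    rw [← Jmul (n+1) g ⟨0, Nat.succ_pos n⟩ a ha, ← hcomm, mulJ0]
  -- facts from the block structure
  have lastcol : ∀ (a : ℕ) (ha : a < n), g ⟨a, ha.trans (Nat.lt_succ_self n)⟩
      ⟨n, Nat.lt_succ_self n⟩ = 0 := by
    intro a ha
    show gmat n (↑B) _ _ = 0
    simp only [gmat, Matrix.of_apply, Fin.val_mk]
    rw [dif_pos ha, dif_neg (lt_irrefl n)]
  have corner : g ⟨n, Nat.lt_succ_self n⟩ ⟨n, Nat.lt_succ_self n⟩ = α := by
    show gmat n (↑B) _ _ = α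
    simp only [gmat, Matrix.of_apply, Fin.val_mk]
    rw [dif_neg (lt_irrefl n), if_neg (lt_irrefl n)]
  have Bentry : ∀ (a b : ℕ) (ha : a < n) (hb : b < n),
      g ⟨a, ha.trans (Nat.lt_succ_self n)⟩ ⟨b, hb.trans (Nat.lt_succ_self n)⟩
        = (B : Matrix (Fin n) (Fin n) ℂ) ⟨a, ha⟩ ⟨b, hb⟩ := by
    intro a b ha hb
    show gmat n (↑B) _ _ = _
    simp only [gmat, Matrix.of_apply, Fin.val_mk]
    rw [dif_pos ha, dif_pos hb]
  -- below the diagonal g vanishes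
  have below : ∀ (b a : ℕ) (hb : b < n + 1) (ha : a < n + 1), b < a →
      g ⟨a, ha⟩ ⟨b, hb⟩ = 0 := by
    intro b
    induction b with
    | zero =>
      intro a hb ha hba
      obtain ⟨c, rfl⟩ : ∃ c, a = c + 1 := ⟨a - 1, by omega⟩
      exact col0 c ha
    | succ c ih =>
      intro a hb ha hba
      obtain ⟨a', rfl⟩ : ∃ a', a = a' + 1 := ⟨a - 1, by omega⟩
      rw [shift a' c ha hb]
      exact ih a' (by omega) (by omega) (by omega)
  -- above the diagonal g vanishes
  have above : ∀ (k a b : ℕ) (ha : a < n + 1) (hb : b < n + 1), a < b → b + k = n →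
      g ⟨a, ha⟩ ⟨b, hb⟩ = 0 := by
    intro k
    induction k with
    | zero =>
      intro a b ha hb hab hbk
      have hb' : b = n := by omega
      subst hb'
      exact lastcol a (by omega)
    | succ c ih =>
      intro a b ha hb hab hbk
      have h1 : a + 1 < n + 1 := by omega
      have h2 : b + 1 < n + 1 := by omega
      rw [← shift a b h1 h2]
      exact ih (a+1) (b+1) h1 h2 (by omega) (by omega)
  -- the diagonal entries all equal α
  have diag : ∀ (k a : ℕ) (ha : a < n + 1), a + k = n → g ⟨a, ha⟩ ⟨a, ha⟩ = α := by
    intro k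
    induction k with
    | zero =>
      intro a ha hk
      have : a = n := by omega
      subst this
      exact corner
    | succ c ih =>
      intro a ha hk
      have h1 : a + 1 < n + 1 := by omega
      rw [← shift a a h1 h1]
      exact ih (a+1) h1 (by omega)
  -- B is the scalar matrix α • 1
  have hB : (B : Matrix (Fin n) (Fin n) ℂ) = α • (1 : Matrix (Fin n) (Fin n) ℂ) := by
    ext i j
    rw [← Bentry i j i.isLt j.isLt]
    rcases lt_trichotomy (i : ℕ) (j : ℕ) with h | h | h
    · rw [above (n - j) i j _ _ h (by omega)]
      rw [Matrix.smul_apply, Matrix.one_apply_ne (by intro e; rw [Fin.ext_iff] at e; omega), smul_zero]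
    · have : (⟨(i:ℕ), i.isLt.trans (Nat.lt_succ_self n)⟩ : Fin (n+1))
          = ⟨(j:ℕ), j.isLt.trans (Nat.lt_succ_self n)⟩ := by
        exact Fin.ext h
      rw [this, diag (n - j) j _ (by omega)]
      simp [Matrix.one_apply, Fin.ext_iff, h]
    · rw [below j i _ _ h]
      rw [Matrix.smul_apply, Matrix.one_apply_ne (by intro e; rw [Fin.ext_iff] at e; omega), smul_zero]
  have hdetu : IsUnit ((B : Matrix (Fin n) (Fin n) ℂ).det) := Matrix.isUnits_det_units B
  have hdet0 : ((B : Matrix (Fin n) (Fin n) ℂ).det) ≠ 0 := hdetu.ne_zero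
  have hdet : ((B : Matrix (Fin n) (Fin n) ℂ).det) = α ^ n := by
    rw [hB, Matrix.det_smul, Matrix.det_one, mul_one]
    simp
  refine ⟨α, ?_, ?_⟩
  · have : α * α ^ n = 1 := by
      rw [← hdet, hα, inv_mul_cancel₀ hdet0]
    rw [pow_succ]
    rw [mul_comm] at this
    linear_combination this
  · ext i j
    rcases lt_trichotomy (i : ℕ) (j : ℕ) with h | h | h
    · have := above (n - j) i j i.isLt j.isLt h (by omega)
      simp only [Fin.eta] at this
      rw [this]
      rw [Matrix.smul_apply, Matrix.one_apply_ne (by intro e; rw [Fin.ext_iff] at e; omega), smul_zero]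
    · have hij : i = j := Fin.ext h
      subst hij
      have := diag (n - i) i i.isLt (by omega)
      simp only [Fin.eta] at this
      rw [this]
      simp [Matrix.one_apply]
    · have := below j i j.isLt i.isLt h
      simp only [Fin.eta] at this
      rw [this]
      rw [Matrix.smul_apply, Matrix.one_apply_ne (by intro e; rw [Fin.ext_iff] at e; omega), smul_zero]
end
end

section
/- Let x ∈ M_{2n+2}(ℂ) be the block matrix (with block sizes n, n, 1, 1) x = [[J, 0, eₙ, 0],[0, −Jᵗ, 0, e₁],[0, −eₙᵗ, 0, 0],[−e₁ᵗ, 0, 0, 0]]. If A ∈ M_{2n+1}(ℂ) satisfies det A = 1 and AᵗΓ₀A = Γ₀, and the block-diagonal matrix blockdiag(A,1) ∈ M_{2n+2}(ℂ) commutes with x, then A = I_{2n+1}. Hence the element x of so(2n+2,ℂ) (realized relative to Γ) has trivial stabilizer in K^ℂ. -/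
open Matrix

noncomputable section

/-- The matrix `Γ₀ = [[0, Iₙ, 0], [Iₙ, 0, 0], [0, 0, 1]] ∈ M_{2n+1}(ℂ)`. -/
def gamma0odd (n : ℕ) : Matrix (Fin (2 * n + 1)) (Fin (2 * n + 1)) ℂ :=
  Matrix.of fun i j =>
    if ((i : ℕ) + n = (j : ℕ) ∧ (j : ℕ) < 2 * n) ∨
        ((j : ℕ) + n = (i : ℕ) ∧ (i : ℕ) < 2 * n) ∨
        ((i : ℕ) = 2 * n ∧ (j : ℕ) = 2 * n) then 1 else 0

/-- The block matrix (block sizes `n, n, 1, 1`)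
`x = [[J, 0, eₙ, 0], [0, -Jᵗ, 0, e₁], [0, -eₙᵗ, 0, 0], [-e₁ᵗ, 0, 0, 0]] ∈ M_{2n+2}(ℂ)`,
where `J` is the elementary `n × n` Jordan block. -/
def xOdd (n : ℕ) : Matrix (Fin (2 * n + 2)) (Fin (2 * n + 2)) ℂ :=
  Matrix.of fun i j =>
    if (j : ℕ) = (i : ℕ) + 1 ∧ (j : ℕ) < n then 1
    else if (i : ℕ) = (j : ℕ) + 1 ∧ n ≤ (j : ℕ) ∧ (i : ℕ) < 2 * n then -1
    else if (i : ℕ) = n - 1 ∧ (j : ℕ) = 2 * n then 1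
    else if (i : ℕ) = n ∧ (j : ℕ) = 2 * n + 1 then 1
    else if (i : ℕ) = 2 * n ∧ (j : ℕ) = 2 * n - 1 then -1
    else if (i : ℕ) = 2 * n + 1 ∧ (j : ℕ) = 0 then -1
    else 0

/-- The block diagonal matrix `blockdiag (A, 1) ∈ M_{2n+2}(ℂ)` for `A ∈ M_{2n+1}(ℂ)`. -/
def embedOdd (n : ℕ) (A : Matrix (Fin (2 * n + 1)) (Fin (2 * n + 1)) ℂ) :
    Matrix (Fin (2 * n + 2)) (Fin (2 * n + 2)) ℂ :=
  Matrix.of fun i j =>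
    if hi : (i : ℕ) < 2 * n + 1 then
      (if hj : (j : ℕ) < 2 * n + 1 then A ⟨i, hi⟩ ⟨j, hj⟩ else 0)
    else if (j : ℕ) < 2 * n + 1 then 0 else 1

/-- If `A ∈ SL(2n+1, ℂ)` satisfies `Aᵗ Γ₀ A = Γ₀` and `blockdiag (A, 1)`
commutes with the element `x` of `so(2n+2, ℂ)` above, then `A = 1`; hence `x` has trivial
stabilizer in `K^ℂ`. -/
theorem statement13 (n : ℕ) (hn : 1 ≤ n)
    (A : Matrix (Fin (2 * n + 1)) (Fin (2 * n + 1)) ℂ)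
    (hdet : A.det = 1) (hA : Aᵀ * gamma0odd n * A = gamma0odd n)
    (hcomm : embedOdd n A * xOdd n = xOdd n * embedOdd n A) :
    A = 1 := by
  set B := embedOdd n A with hB
  -- P m : column m of B is the standard basis vector e_m
  set P : ℕ → Prop := fun m => ∀ (hm : m < 2 * n + 2) (i : Fin (2 * n + 2)),
    B i ⟨m, hm⟩ = if (i : ℕ) = m then 1 else 0 with hPdef
  have hlast : P (2 * n + 1) := by
    intro hm i
    have hi := i.isLt
    simp only [hB, embedOdd, of_apply, Fin.val_mk]
    split_ifs <;>
      first
        | rfl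
        | omega
        | (exfalso
           simp only [and_true, and_false, true_and, false_and, not_true,
             not_false_eq_true, add_zero] at *
           omega)
        | (exfalso
           simp only [and_true, and_false, true_and, false_and, not_true,
             not_false_eq_true, add_zero] at *)
  have step : ∀ (j m : ℕ) (c : ℂ) (hj : j < 2 * n + 2), m < 2 * n + 2 → c ≠ 0 →
      (∀ l : Fin (2 * n + 2), xOdd n l ⟨j, hj⟩ = if (l : ℕ) = m then c else 0) →
      P j → P m := by
    intro j m c hj hm hc hcol hPj hm' i
    have h := congrFun (congrFun hcomm i) ⟨j, hj⟩
    simp only [mul_apply] at h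
    have hcol' : ∀ l : Fin (2 * n + 2), xOdd n l ⟨j, hj⟩ =
        if l = (⟨m, hm⟩ : Fin (2 * n + 2)) then c else 0 := by
      intro l; rw [hcol]; congr 1
      simp [Fin.ext_iff]
    have hPj' : ∀ l : Fin (2 * n + 2), B l ⟨j, hj⟩ =
        if l = (⟨j, hj⟩ : Fin (2 * n + 2)) then 1 else 0 := by
      intro l; rw [hPj hj l]; congr 1
      simp [Fin.ext_iff]
    simp only [hcol', hPj', mul_ite, mul_one, mul_zero, ite_mul, one_mul, zero_mul,
      Finset.sum_ite_eq, Finset.sum_ite_eq', Finset.mem_univ, if_true] at h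
    -- h : B i ⟨m, hm⟩ * c = if i = ⟨m, hm⟩ then c else 0
    rcases eq_or_ne i (⟨m, hm⟩ : Fin (2 * n + 2)) with he | he
    · rw [if_pos (show (i : ℕ) = m from by rw [he])]
      rw [if_pos he] at h
      exact mul_right_cancel₀ hc (by rw [one_mul]; exact h)
    · rw [if_neg (show ¬(i : ℕ) = m from fun hh => he (Fin.ext hh))]
      rw [if_neg he] at h
      exact (mul_eq_zero.mp h).resolve_right hc
  -- upward chain: P (n + k) for k ≤ n
  have hup : ∀ k, k ≤ n → P (n + k) := by
    intro k
    induction k with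
    | zero =>
      intro _
      refine step (2 * n + 1) (n + 0) 1 (by omega) (by omega) one_ne_zero ?_ hlast
      intro l
      have hl := l.isLt
      simp only [xOdd, of_apply, Fin.val_mk]
      split_ifs <;>
      first
        | rfl
        | omega
        | (exfalso
           simp only [and_true, and_false, true_and, false_and, not_true,
             not_false_eq_true, add_zero] at *
           omega)
        | (exfalso
           simp only [and_true, and_false, true_and, false_and, not_true,
             not_false_eq_true, add_zero] at *)
    | succ k ih =>
      intro hk
      refine step (n + k) (n + (k + 1)) (-1) (by omega) (by omega) (by norm_num)
        ?_ (ih (by omega))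
      intro l
      have hl := l.isLt
      simp only [xOdd, of_apply, Fin.val_mk]
      split_ifs <;>
      first
        | rfl
        | omega
        | (exfalso
           simp only [and_true, and_false, true_and, false_and, not_true,
             not_false_eq_true, add_zero] at *
           omega)
        | (exfalso
           simp only [and_true, and_false, true_and, false_and, not_true,
             not_false_eq_true, add_zero] at *)
  -- downward chain: P (n - 1 - k) for k ≤ n - 1
  have hdown : ∀ k, k ≤ n - 1 → P (n - 1 - k) := by
    intro k
    induction k with
    | zero =>
      intro _
      refine step (n + n) (n - 1 - 0) 1 (by omega) (by omega) one_ne_zero ?_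
        (hup n le_rfl)
      intro l
      have hl := l.isLt
      simp only [xOdd, of_apply, Fin.val_mk]
      split_ifs <;>
      first
        | rfl
        | omega
        | (exfalso
           simp only [and_true, and_false, true_and, false_and, not_true,
             not_false_eq_true, add_zero] at *
           omega)
        | (exfalso
           simp only [and_true, and_false, true_and, false_and, not_true,
             not_false_eq_true, add_zero] at *)
    | succ k ih =>
      intro hk
      refine step (n - 1 - k) (n - 1 - (k + 1)) 1 (by omega) (by omega) one_ne_zero
        ?_ (ih (by omega))
      intro l
      have hl := l.isLt
      simp only [xOdd, of_apply, Fin.val_mk]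
      split_ifs <;>
      first
        | rfl
        | omega
        | (exfalso
           simp only [and_true, and_false, true_and, false_and, not_true,
             not_false_eq_true, add_zero] at *
           omega)
        | (exfalso
           simp only [and_true, and_false, true_and, false_and, not_true,
             not_false_eq_true, add_zero] at *)
  have key : ∀ m, m < 2 * n + 2 → P m := by
    intro m hm
    by_cases h1 : m = 2 * n + 1
    · rw [h1]; exact hlast
    by_cases h2 : n ≤ m
    · have := hup (m - n) (by omega)
      rwa [show n + (m - n) = m by omega] at this
    · have := hdown (n - 1 - m) (by omega)
      rwa [show n - 1 - (n - 1 - m) = m by omega] at this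
  ext i j
  have hij := key j.val (by omega) (by omega) ⟨i.val, by omega⟩
  have hBval : B ⟨(i : ℕ), by omega⟩ ⟨(j : ℕ), by omega⟩ = A i j := by
    simp only [hB, embedOdd, of_apply]
    rw [dif_pos (show ((⟨(i : ℕ), by omega⟩ : Fin (2 * n + 2)) : ℕ) < 2 * n + 1 from i.isLt)]
    rw [dif_pos (show ((⟨(j : ℕ), by omega⟩ : Fin (2 * n + 2)) : ℕ) < 2 * n + 1 from j.isLt)]
  rw [hBval] at hij
  rw [hij, Matrix.one_apply]
  congr 1
  simp [Fin.ext_iff]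
end
end

section
/- Let x ∈ M_{2n+1}(ℂ) be the block matrix (with block sizes n, n, 1) x = [[J, Δ, 0],[0, −Jᵗ, e₁],[−e₁ᵗ, 0, 0]]. If A ∈ M_{2n}(ℂ) satisfies det A = 1 and AᵗΓ₀A = Γ₀, and the block-diagonal matrix blockdiag(A,1) ∈ M_{2n+1}(ℂ) commutes with x, then A = I_{2n}. Hence the element x of so(2n+1,ℂ) (realized relative to Γ) has trivial stabilizer in K^ℂ. -/
open Matrix

noncomputable section

/-- The matrix `Γ₀ = [[0, Iₙ], [Iₙ, 0]] ∈ M_{2n}(ℂ)`. -/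
def gamma0even (n : ℕ) : Matrix (Fin (2 * n)) (Fin (2 * n)) ℂ :=
  Matrix.of fun i j =>
    if (i : ℕ) + n = (j : ℕ) ∨ (j : ℕ) + n = (i : ℕ) then 1 else 0

/-- The block matrix (block sizes `n, n, 1`)
`x = [[J, Δ, 0], [0, -Jᵗ, e₁], [-e₁ᵗ, 0, 0]] ∈ M_{2n+1}(ℂ)`, where `J` is the elementary
`n × n` Jordan block and `Δ` has only the nonzero entries `Δ_{n-1,n} = 1`, `Δ_{n,n-1} = -1`
(1-indexed). -/
def xEven (n : ℕ) : Matrix (Fin (2 * n + 1)) (Fin (2 * n + 1)) ℂ :=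
  Matrix.of fun i j =>
    if (j : ℕ) = (i : ℕ) + 1 ∧ (j : ℕ) < n then 1
    else if (i : ℕ) = n - 2 ∧ (j : ℕ) = 2 * n - 1 then 1
    else if (i : ℕ) = n - 1 ∧ (j : ℕ) = 2 * n - 2 then -1
    else if (i : ℕ) = (j : ℕ) + 1 ∧ n ≤ (j : ℕ) ∧ (i : ℕ) < 2 * n then -1
    else if (i : ℕ) = n ∧ (j : ℕ) = 2 * n then 1
    else if (i : ℕ) = 2 * n ∧ (j : ℕ) = 0 then -1
    else 0

/-- The block diagonal matrix `blockdiag (A, 1) ∈ M_{2n+1}(ℂ)` for `A ∈ M_{2n}(ℂ)`. -/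
def embedEven (n : ℕ) (A : Matrix (Fin (2 * n)) (Fin (2 * n)) ℂ) :
    Matrix (Fin (2 * n + 1)) (Fin (2 * n + 1)) ℂ :=
  Matrix.of fun i j =>
    if hi : (i : ℕ) < 2 * n then
      (if hj : (j : ℕ) < 2 * n then A ⟨i, hi⟩ ⟨j, hj⟩ else 0)
    else if (j : ℕ) < 2 * n then 0 else 1

/-- Restriction of `xEven` to the upper-left `2n × 2n` block. -/
def XE (n : ℕ) : Matrix (Fin (2 * n)) (Fin (2 * n)) ℂ :=
  Matrix.of fun i j => xEven n i.castSucc j.castSucc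

namespace St14

variable {n : ℕ}

lemma XE_apply (i j : Fin (2 * n)) :
    XE n i j =
      if (j : ℕ) = (i : ℕ) + 1 ∧ (j : ℕ) < n then 1
      else if (i : ℕ) = n - 2 ∧ (j : ℕ) = 2 * n - 1 then 1
      else if (i : ℕ) = n - 1 ∧ (j : ℕ) = 2 * n - 2 then -1
      else if (i : ℕ) = (j : ℕ) + 1 ∧ n ≤ (j : ℕ) then -1
      else 0 := by
  have hi := i.isLt; have hj := j.isLt
  simp only [XE, xEven, Matrix.of_apply, Fin.coe_castSucc]
  split_ifs <;> first | rfl | (exfalso; omega) | (exfalso; simp only [and_true, true_and] at *; omega) | (norm_num; done)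

lemma sum_mul_indN {N : ℕ} (f : Fin N → ℂ) (c : ℂ) (m : ℕ) (hm : m < N) :
    (∑ k : Fin N, f k * (if (k : ℕ) = m then c else 0)) = f ⟨m, hm⟩ * c := by
  rw [Finset.sum_eq_single_of_mem (⟨m, hm⟩ : Fin N) (Finset.mem_univ _)]
  · rw [if_pos rfl]
  · intro b _ hb
    rw [if_neg (fun hbv => hb (Fin.ext hbv)), mul_zero]

lemma sum_mul_indN2 {N : ℕ} (f : Fin N → ℂ) (c d : ℂ) (m p : ℕ) (hm : m < N) (hp : p < N) :
    (∑ k : Fin N, f k * ((if (k : ℕ) = m then c else 0) + (if (k : ℕ) = p then d else 0)))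
      = f ⟨m, hm⟩ * c + f ⟨p, hp⟩ * d := by
  simp only [mul_add]
  rw [Finset.sum_add_distrib, sum_mul_indN f c m hm, sum_mul_indN f d p hp]

end St14

namespace St14
variable {n : ℕ}

lemma col_up (hn : 2 ≤ n) {m : ℕ} (h1 : n ≤ m) (h2 : m ≤ 2 * n - 3) (hm : m < 2 * n)
    (k : Fin (2 * n)) :
    XE n k ⟨m, hm⟩ = if (k : ℕ) = m + 1 then -1 else 0 := by
  have hk := k.isLt
  have hv : ((⟨m, hm⟩ : Fin (2 * n)) : ℕ) = m := rfl
  rw [XE_apply, hv]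
  split_ifs <;> first | rfl | (exfalso; omega) | (exfalso; simp only [and_true, true_and] at *; omega) | (norm_num; done)

lemma col_low (hn : 2 ≤ n) {m : ℕ} (h1 : 1 ≤ m) (h2 : m ≤ n - 1) (hm : m < 2 * n)
    (k : Fin (2 * n)) :
    XE n k ⟨m, hm⟩ = if (k : ℕ) = m - 1 then 1 else 0 := by
  have hk := k.isLt
  have hv : ((⟨m, hm⟩ : Fin (2 * n)) : ℕ) = m := rfl
  rw [XE_apply, hv]
  split_ifs <;> first | rfl | (exfalso; omega) | (exfalso; simp only [and_true, true_and] at *; omega) | (norm_num; done)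

lemma col_2n2 (hn : 2 ≤ n) (hm : 2 * n - 2 < 2 * n) (k : Fin (2 * n)) :
    XE n k ⟨2 * n - 2, hm⟩
      = (if (k : ℕ) = n - 1 then -1 else 0) + (if (k : ℕ) = 2 * n - 1 then -1 else 0) := by
  have hk := k.isLt
  have hv : ((⟨2 * n - 2, hm⟩ : Fin (2 * n)) : ℕ) = 2 * n - 2 := rfl
  rw [XE_apply, hv]
  split_ifs <;> first | rfl | (exfalso; omega) | (exfalso; simp only [and_true, true_and] at *; omega) | (norm_num; done)

lemma col_2n1 (hn : 2 ≤ n) (hm : 2 * n - 1 < 2 * n) (k : Fin (2 * n)) :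
    XE n k ⟨2 * n - 1, hm⟩ = if (k : ℕ) = n - 2 then 1 else 0 := by
  have hk := k.isLt
  have hv : ((⟨2 * n - 1, hm⟩ : Fin (2 * n)) : ℕ) = 2 * n - 1 := rfl
  rw [XE_apply, hv]
  split_ifs <;> first | rfl | (exfalso; omega) | (exfalso; simp only [and_true, true_and] at *; omega) | (norm_num; done)

lemma row_low (hn : 2 ≤ n) {m : ℕ} (h2 : m + 1 ≤ n - 2) (hm : m < 2 * n)
    (k : Fin (2 * n)) :
    XE n ⟨m, hm⟩ k = if (k : ℕ) = m + 1 then 1 else 0 := by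
  have hk := k.isLt
  have hv : ((⟨m, hm⟩ : Fin (2 * n)) : ℕ) = m := rfl
  rw [XE_apply, hv]
  split_ifs <;> first | rfl | (exfalso; omega) | (exfalso; simp only [and_true, true_and] at *; omega) | (norm_num; done)

lemma row_n2 (hn : 2 ≤ n) (hm : n - 2 < 2 * n) (k : Fin (2 * n)) :
    XE n ⟨n - 2, hm⟩ k
      = (if (k : ℕ) = n - 1 then 1 else 0) + (if (k : ℕ) = 2 * n - 1 then 1 else 0) := by
  have hk := k.isLt
  have hv : ((⟨n - 2, hm⟩ : Fin (2 * n)) : ℕ) = n - 2 := rfl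
  rw [XE_apply, hv]
  split_ifs <;> first | rfl | (exfalso; omega) | (exfalso; simp only [and_true, true_and] at *; omega) | (norm_num; done)

lemma row_high (hn : 2 ≤ n) {m : ℕ} (h1 : n + 1 ≤ m) (h2 : m ≤ 2 * n - 1) (hm : m < 2 * n)
    (k : Fin (2 * n)) :
    XE n ⟨m, hm⟩ k = if (k : ℕ) = m - 1 then -1 else 0 := by
  have hk := k.isLt
  have hv : ((⟨m, hm⟩ : Fin (2 * n)) : ℕ) = m := rfl
  rw [XE_apply, hv]
  split_ifs <;> first | rfl | (exfalso; omega) | (exfalso; simp only [and_true, true_and] at *; omega) | (norm_num; done)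

lemma xcol_last (hn : 2 ≤ n) (k : Fin (2 * n)) :
    xEven n k.castSucc (Fin.last (2 * n)) = if (k : ℕ) = n then 1 else 0 := by
  have hk := k.isLt
  simp only [xEven, Matrix.of_apply, Fin.coe_castSucc, Fin.val_last]
  split_ifs <;> first | rfl | (exfalso; omega) | (exfalso; simp only [and_true, true_and] at *; omega) | (norm_num; done)

lemma gcol_n (hn : 2 ≤ n) (hm : n < 2 * n) (p : Fin (2 * n)) :
    gamma0even n p ⟨n, hm⟩ = if (p : ℕ) = 0 then 1 else 0 := by
  have hp := p.isLt
  have hv : ((⟨n, hm⟩ : Fin (2 * n)) : ℕ) = n := rfl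
  simp only [gamma0even, Matrix.of_apply, hv]
  split_ifs <;> first | rfl | (exfalso; omega) | (exfalso; simp only [and_true, true_and] at *; omega) | (norm_num; done)

lemma embed_apply_lt (A : Matrix (Fin (2 * n)) (Fin (2 * n)) ℂ) (i j : Fin (2 * n)) :
    embedEven n A i.castSucc j.castSucc = A i j := by
  simp only [embedEven, Matrix.of_apply, Fin.coe_castSucc]
  rw [dif_pos i.isLt, dif_pos j.isLt]

lemma embed_last_left (A : Matrix (Fin (2 * n)) (Fin (2 * n)) ℂ) (j : Fin (2 * n)) :
    embedEven n A (Fin.last (2 * n)) j.castSucc = 0 := by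
  simp only [embedEven, Matrix.of_apply, Fin.val_last, Fin.coe_castSucc]
  rw [dif_neg (by omega), if_pos j.isLt]

lemma embed_last_right (A : Matrix (Fin (2 * n)) (Fin (2 * n)) ℂ) (i : Fin (2 * n)) :
    embedEven n A i.castSucc (Fin.last (2 * n)) = 0 := by
  simp only [embedEven, Matrix.of_apply, Fin.val_last, Fin.coe_castSucc]
  rw [dif_pos i.isLt, dif_neg (by omega)]

lemma embed_last_last (A : Matrix (Fin (2 * n)) (Fin (2 * n)) ℂ) :
    embedEven n A (Fin.last (2 * n)) (Fin.last (2 * n)) = 1 := by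
  simp only [embedEven, Matrix.of_apply, Fin.val_last]
  rw [dif_neg (by omega), if_neg (by omega)]

end St14

namespace St14
variable {n : ℕ}

lemma extract_AX (hn : 2 ≤ n) (A : Matrix (Fin (2 * n)) (Fin (2 * n)) ℂ)
    (hcomm : embedEven n A * xEven n = xEven n * embedEven n A) :
    ∀ i j : Fin (2 * n),
      (∑ k : Fin (2 * n), A i k * XE n k j) = ∑ k : Fin (2 * n), XE n i k * A k j := by
  intro i j
  have h := Matrix.ext_iff.2 hcomm i.castSucc j.castSucc
  rw [Matrix.mul_apply, Matrix.mul_apply, Fin.sum_univ_castSucc, Fin.sum_univ_castSucc] at h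
  simp only [embed_apply_lt, embed_last_left, embed_last_right, zero_mul, mul_zero,
    add_zero] at h
  simpa only [XE, Matrix.of_apply] using h

lemma extract_coln (hn : 2 ≤ n) (A : Matrix (Fin (2 * n)) (Fin (2 * n)) ℂ)
    (hcomm : embedEven n A * xEven n = xEven n * embedEven n A) (hm : n < 2 * n) :
    ∀ i : Fin (2 * n), A i ⟨n, hm⟩ = if (i : ℕ) = n then 1 else 0 := by
  intro i
  have h := Matrix.ext_iff.2 hcomm i.castSucc (Fin.last (2 * n))
  rw [Matrix.mul_apply, Matrix.mul_apply, Fin.sum_univ_castSucc, Fin.sum_univ_castSucc] at h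
  simp only [embed_apply_lt, embed_last_left, embed_last_right, embed_last_last,
    zero_mul, mul_zero, add_zero, one_mul, mul_one] at h
  simp only [xcol_last hn] at h
  rw [sum_mul_indN (fun k => A i k) 1 n hm] at h
  rw [mul_one] at h
  simpa using h

end St14

namespace St14
variable {n : ℕ}

lemma stepSingle (A : Matrix (Fin (2 * n)) (Fin (2 * n)) ℂ)
    (hAX : ∀ i j : Fin (2 * n),
      (∑ k : Fin (2 * n), A i k * XE n k j) = ∑ k : Fin (2 * n), XE n i k * A k j)
    (jm rm : ℕ) (hj : jm < 2 * n) (hr : rm < 2 * n) (c : ℂ) (hc : c ≠ 0)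
    (hcol : ∀ k : Fin (2 * n), XE n k ⟨jm, hj⟩ = if (k : ℕ) = rm then c else 0)
    (hfix : ∀ k : Fin (2 * n), A k ⟨jm, hj⟩ = if (k : ℕ) = jm then 1 else 0) :
    ∀ i : Fin (2 * n), A i ⟨rm, hr⟩ = if (i : ℕ) = rm then 1 else 0 := by
  intro i
  have h := hAX i ⟨jm, hj⟩
  simp only [hcol, hfix] at h
  rw [sum_mul_indN (fun k => A i k) c rm hr, sum_mul_indN (fun k => XE n i k) 1 jm hj,
    mul_one, hcol i] at h
  by_cases hir : (i : ℕ) = rm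
  · rw [if_pos hir] at h
    rw [if_pos hir]
    exact mul_right_cancel₀ hc (by rw [h, one_mul])
  · rw [if_neg hir] at h
    rw [if_neg hir]
    exact (mul_eq_zero.mp h).resolve_right hc

end St14

namespace St14
variable {n : ℕ}

lemma sum_ind_mul {N : ℕ} (f : Fin N → ℂ) (c : ℂ) (m : ℕ) (hm : m < N) :
    (∑ k : Fin N, (if (k : ℕ) = m then c else 0) * f k) = c * f ⟨m, hm⟩ := by
  have h := sum_mul_indN f c m hm
  calc (∑ k : Fin N, (if (k : ℕ) = m then c else 0) * f k)
      = ∑ k : Fin N, f k * (if (k : ℕ) = m then c else 0) := by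
        exact Finset.sum_congr rfl fun k _ => mul_comm _ _
    _ = f ⟨m, hm⟩ * c := h
    _ = c * f ⟨m, hm⟩ := mul_comm _ _

lemma sum_ind_mul2 {N : ℕ} (f : Fin N → ℂ) (c d : ℂ) (m p : ℕ) (hm : m < N) (hp : p < N) :
    (∑ k : Fin N, ((if (k : ℕ) = m then c else 0) + (if (k : ℕ) = p then d else 0)) * f k)
      = c * f ⟨m, hm⟩ + d * f ⟨p, hp⟩ := by
  simp only [add_mul]
  rw [Finset.sum_add_distrib, sum_ind_mul f c m hm, sum_ind_mul f d p hp]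

lemma sum_ind {N : ℕ} (c : ℂ) (m : ℕ) (hm : m < N) :
    (∑ k : Fin N, (if (k : ℕ) = m then c else 0)) = c := by
  have h := sum_mul_indN (fun _ => (1 : ℂ)) c m hm
  simpa using h

lemma fixCongr (A : Matrix (Fin (2 * n)) (Fin (2 * n)) ℂ) {a b : ℕ}
    (ha : a < 2 * n) (hb : b < 2 * n) (hab : a = b)
    (h : ∀ i : Fin (2 * n), A i ⟨a, ha⟩ = if (i : ℕ) = a then 1 else 0) :
    ∀ i : Fin (2 * n), A i ⟨b, hb⟩ = if (i : ℕ) = b then 1 else 0 := by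
  subst hab; exact h

lemma col_n1 (hn : 2 ≤ n) (hm : n - 1 < 2 * n) (k : Fin (2 * n)) :
    XE n k ⟨n - 1, hm⟩ = if (k : ℕ) = n - 2 then 1 else 0 := by
  have hk := k.isLt
  have hv : ((⟨n - 1, hm⟩ : Fin (2 * n)) : ℕ) = n - 1 := rfl
  rw [XE_apply, hv]
  split_ifs <;> first | rfl | (exfalso; omega) | (exfalso; simp only [and_true, true_and] at *; omega) | (norm_num; done)

end St14


/-- If `A ∈ SL(2n, ℂ)` satisfies `Aᵗ Γ₀ A = Γ₀` and `blockdiag (A, 1)`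
commutes with the element `x` of `so(2n+1, ℂ)` above, then `A = 1`; hence `x` has trivial
stabilizer in `K^ℂ`. -/
theorem statement14 (n : ℕ) (hn : 2 ≤ n)
    (A : Matrix (Fin (2 * n)) (Fin (2 * n)) ℂ)
    (hdet : A.det = 1) (hA : Aᵀ * gamma0even n * A = gamma0even n)
    (hcomm : embedEven n A * xEven n = xEven n * embedEven n A) :
    A = 1 := by
  have hmn : n < 2 * n := by omega
  have h0 : (0 : ℕ) < 2 * n := by omega
  have hn1 : n - 1 < 2 * n := by omega
  have hn2 : n - 2 < 2 * n := by omega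
  have h2n1 : 2 * n - 1 < 2 * n := by omega
  have h2n2 : 2 * n - 2 < 2 * n := by omega
  have hAX := St14.extract_AX hn A hcomm
  have hcoln := St14.extract_coln hn A hcomm hmn
  -- upward chain: columns n, n+1, ..., 2n-2 of A are standard basis vectors
  have hup : ∀ (t : ℕ) (_ht : t ≤ n - 2) (i : Fin (2 * n)),
      A i ⟨n + t, by omega⟩ = if (i : ℕ) = n + t then 1 else 0 := by
    intro t
    induction t with
    | zero =>
      intro _
      exact St14.fixCongr A hmn (by omega) (by omega) hcoln
    | succ t ih =>
      intro ht
      exact St14.fixCongr A (by omega) (by omega) (by omega)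
        (St14.stepSingle A hAX (n + t) (n + t + 1) (by omega) (by omega) (-1) (by norm_num)
          (St14.col_up hn (by omega) (by omega) (by omega)) (ih (by omega)))
  have hfixhi : ∀ (m : ℕ) (hm : m < 2 * n), n ≤ m → m ≤ 2 * n - 2 →
      ∀ i : Fin (2 * n), A i ⟨m, hm⟩ = if (i : ℕ) = m then 1 else 0 := by
    intro m hm hm1 hm2
    exact St14.fixCongr A (by omega) hm (by omega : n + (m - n) = m) (hup (m - n) (by omega))
  have hfix2n2 := hfixhi (2 * n - 2) h2n2 (by omega) (by omega)
  -- the sum relation for columns n-1 and 2n-1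
  have hsum : ∀ i : Fin (2 * n), A i ⟨n - 1, hn1⟩ + A i ⟨2 * n - 1, h2n1⟩
      = (if (i : ℕ) = n - 1 then 1 else 0) + (if (i : ℕ) = 2 * n - 1 then 1 else 0) := by
    intro i
    have h := hAX i ⟨2 * n - 2, h2n2⟩
    simp only [St14.col_2n2 hn h2n2, hfix2n2] at h
    rw [St14.sum_mul_indN2 (fun k => A i k) (-1) (-1) (n - 1) (2 * n - 1) hn1 h2n1] at h
    rw [St14.sum_mul_indN (fun k => XE n i k) 1 (2 * n - 2) h2n2, mul_one,
      St14.col_2n2 hn h2n2 i] at h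
    split_ifs at h ⊢ <;> linear_combination -h
  -- column n-2 is fixed
  have hfixn2 : ∀ i : Fin (2 * n), A i ⟨n - 2, hn2⟩ = if (i : ℕ) = n - 2 then 1 else 0 := by
    intro i
    have h1 := hAX i ⟨n - 1, hn1⟩
    have h2 := hAX i ⟨2 * n - 1, h2n1⟩
    simp only [St14.col_n1 hn hn1] at h1
    simp only [St14.col_2n1 hn h2n1] at h2
    rw [St14.sum_mul_indN (fun k => A i k) 1 (n - 2) hn2, mul_one] at h1 h2
    have h3 : A i ⟨n - 2, hn2⟩ + A i ⟨n - 2, hn2⟩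
        = ∑ k : Fin (2 * n), (XE n i k * A k ⟨n - 1, hn1⟩ + XE n i k * A k ⟨2 * n - 1, h2n1⟩) := by
      rw [Finset.sum_add_distrib, ← h1, ← h2]
    simp only [← mul_add] at h3
    simp only [hsum] at h3
    rw [St14.sum_mul_indN2 (fun k => XE n i k) 1 1 (n - 1) (2 * n - 1) hn1 h2n1] at h3
    rw [St14.col_n1 hn hn1 i, St14.col_2n1 hn h2n1 i] at h3
    simp only [mul_one] at h3
    linear_combination h3 / 2
  -- downward chain
  have hdown : ∀ (t : ℕ) (_ht : t ≤ n - 2) (i : Fin (2 * n)),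
      A i ⟨n - 2 - t, by omega⟩ = if (i : ℕ) = n - 2 - t then 1 else 0 := by
    intro t
    induction t with
    | zero =>
      intro _
      exact St14.fixCongr A hn2 (by omega) (by omega) hfixn2
    | succ t ih =>
      intro ht
      exact St14.fixCongr A (by omega) (by omega) (by omega : n - 2 - t - 1 = n - 2 - (t + 1))
        (St14.stepSingle A hAX (n - 2 - t) (n - 2 - t - 1) (by omega) (by omega) 1 one_ne_zero
          (St14.col_low hn (by omega) (by omega) (by omega)) (ih (by omega)))
  -- all columns other than n-1 and 2n-1 are fixed
  have hall : ∀ (m : ℕ) (hm : m < 2 * n), m ≠ n - 1 → m ≠ 2 * n - 1 →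
      ∀ i : Fin (2 * n), A i ⟨m, hm⟩ = if (i : ℕ) = m then 1 else 0 := by
    intro m hm hne1 hne2
    rcases (by omega : m ≤ n - 2 ∨ (n ≤ m ∧ m ≤ 2 * n - 2)) with h | h
    · exact St14.fixCongr A (by omega) hm (by omega : n - 2 - (n - 2 - m) = m)
        (hdown (n - 2 - m) (by omega))
    · exact hfixhi m hm h.1 h.2
  -- kernel relation for column n-1
  have hK : ∀ i : Fin (2 * n),
      (∑ k : Fin (2 * n), XE n i k * A k ⟨n - 1, hn1⟩) = if (i : ℕ) = n - 2 then 1 else 0 := by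
    intro i
    have h1 := hAX i ⟨n - 1, hn1⟩
    simp only [St14.col_n1 hn hn1] at h1
    rw [St14.sum_mul_indN (fun k => A i k) 1 (n - 2) hn2, mul_one, hfixn2 i] at h1
    exact h1.symm
  -- middle entries of column n-1 vanish
  have hmid : ∀ (m : ℕ) (hm : m < 2 * n), 1 ≤ m → m ≤ n - 2 →
      A ⟨m, hm⟩ ⟨n - 1, hn1⟩ = 0 := by
    intro m hm hm1 hm2
    have h := hK ⟨m - 1, by omega⟩
    simp only [St14.row_low hn (show (m - 1) + 1 ≤ n - 2 by omega) (by omega)] at h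
    rw [St14.sum_ind_mul (fun k => A k ⟨n - 1, hn1⟩) 1 (m - 1 + 1) (by omega)] at h
    rw [one_mul, if_neg (show ¬(m - 1 = n - 2) by omega)] at h
    have e : (⟨m, hm⟩ : Fin (2 * n)) = ⟨m - 1 + 1, by omega⟩ := by
      apply Fin.ext; show m = m - 1 + 1; omega
    rw [e]
    exact h
  -- high entries of column n-1 vanish
  have hhigh : ∀ (m : ℕ) (hm : m < 2 * n), n ≤ m → m ≤ 2 * n - 2 →
      A ⟨m, hm⟩ ⟨n - 1, hn1⟩ = 0 := by
    intro m hm hm1 hm2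
    have h := hK ⟨m + 1, by omega⟩
    simp only [St14.row_high hn (show n + 1 ≤ m + 1 by omega) (show m + 1 ≤ 2 * n - 1 by omega)
      (by omega)] at h
    rw [St14.sum_ind_mul (fun k => A k ⟨n - 1, hn1⟩) (-1) (m + 1 - 1) (by omega)] at h
    rw [if_neg (show ¬(m + 1 = n - 2) by omega)] at h
    have e : (⟨m, hm⟩ : Fin (2 * n)) = ⟨m + 1 - 1, by omega⟩ := by
      apply Fin.ext; show m = m + 1 - 1; omega
    rw [e]
    linear_combination -h
  -- pair relation for rows n-1, 2n-1 of column n-1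
  have hpair : A ⟨n - 1, hn1⟩ ⟨n - 1, hn1⟩ + A ⟨2 * n - 1, h2n1⟩ ⟨n - 1, hn1⟩ = 1 := by
    have h := hK ⟨n - 2, hn2⟩
    simp only [St14.row_n2 hn hn2] at h
    rw [St14.sum_ind_mul2 (fun k => A k ⟨n - 1, hn1⟩) 1 1 (n - 1) (2 * n - 1) hn1 h2n1] at h
    simp only [one_mul, if_true] at h
    exact h
  -- full description of column n-1
  have hcolN1 : ∀ k : Fin (2 * n), A k ⟨n - 1, hn1⟩ =
      (if (k : ℕ) = 0 then A ⟨0, h0⟩ ⟨n - 1, hn1⟩ else 0)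
      + (if (k : ℕ) = n - 1 then A ⟨n - 1, hn1⟩ ⟨n - 1, hn1⟩ else 0)
      + (if (k : ℕ) = 2 * n - 1 then 1 - A ⟨n - 1, hn1⟩ ⟨n - 1, hn1⟩ else 0) := by
    intro k
    rcases k with ⟨m, hm⟩
    simp only [show ((⟨m, hm⟩ : Fin (2 * n)) : ℕ) = m from rfl]
    rcases (by omega : m = 0 ∨ (1 ≤ m ∧ m ≤ n - 2) ∨ m = n - 1 ∨ (n ≤ m ∧ m ≤ 2 * n - 2)
        ∨ m = 2 * n - 1) with h | h | h | h | h
    · subst h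
      rw [if_pos rfl, if_neg (by omega), if_neg (by omega), add_zero, add_zero]
    · rw [if_neg (by omega), if_neg (by omega), if_neg (by omega), hmid m hm h.1 h.2]
      ring
    · subst h
      rw [if_neg (by omega), if_pos rfl, if_neg (by omega)]
      ring
    · rw [if_neg (by omega), if_neg (by omega), if_neg (by omega), hhigh m hm h.1 h.2]
      ring
    · subst h
      rw [if_neg (by omega), if_neg (by omega), if_pos rfl]
      linear_combination hpair
  -- orthogonality kills the (0, n-1) entry
  have hα0 : A ⟨0, h0⟩ ⟨n - 1, hn1⟩ = 0 := by
    have h := Matrix.ext_iff.2 hA ⟨n - 1, hn1⟩ ⟨n, hmn⟩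
    rw [Matrix.mul_apply] at h
    simp only [hcoln] at h
    rw [St14.sum_mul_indN (fun q => (Aᵀ * gamma0even n) ⟨n - 1, hn1⟩ q) 1 n hmn, mul_one] at h
    rw [Matrix.mul_apply] at h
    simp only [Matrix.transpose_apply] at h
    simp only [St14.gcol_n hn hmn] at h
    rw [St14.sum_mul_indN (fun p => A p ⟨n - 1, hn1⟩) 1 0 h0, mul_one] at h
    rw [if_neg (show ¬(n - 1 = 0) by omega)] at h
    exact h
  -- entrywise description of A
  have hentry : ∀ i j : Fin (2 * n), A i j = (if i = j then 1 else 0)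
      + ((if (i : ℕ) = n - 1 then A ⟨n - 1, hn1⟩ ⟨n - 1, hn1⟩ - 1 else 0)
          + (if (i : ℕ) = 2 * n - 1 then 1 - A ⟨n - 1, hn1⟩ ⟨n - 1, hn1⟩ else 0))
        * (if (j : ℕ) = n - 1 then 1 else if (j : ℕ) = 2 * n - 1 then -1 else 0) := by
    intro i j
    have hiv := i.isLt
    rcases j with ⟨m, hm⟩
    simp only [Fin.ext_iff, show ((⟨m, hm⟩ : Fin (2 * n)) : ℕ) = m from rfl]
    rcases (by omega : m = n - 1 ∨ m = 2 * n - 1 ∨ (m ≠ n - 1 ∧ m ≠ 2 * n - 1)) with h | h | h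
    · subst h
      rw [hcolN1 i, hα0]
      split_ifs <;> first | ring1 | (exfalso; omega)
    · subst h
      have hs := hsum i
      rw [hcolN1 i, hα0] at hs
      split_ifs at hs ⊢ <;> first | (exfalso; omega) | linear_combination hs
    · rw [hall m hm h.1 h.2 i]
      rw [if_neg h.1, if_neg h.2]
      split_ifs <;> ring
  -- determinant computation
  have hfull : A = 1 + Matrix.replicateCol Unit
      (fun i : Fin (2 * n) =>
        (if (i : ℕ) = n - 1 then A ⟨n - 1, hn1⟩ ⟨n - 1, hn1⟩ - 1 else 0)
          + (if (i : ℕ) = 2 * n - 1 then 1 - A ⟨n - 1, hn1⟩ ⟨n - 1, hn1⟩ else 0))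
      * Matrix.replicateRow Unit
      (fun j : Fin (2 * n) =>
        if (j : ℕ) = n - 1 then (1 : ℂ) else if (j : ℕ) = 2 * n - 1 then -1 else 0) := by
    ext i j
    rw [Matrix.add_apply, Matrix.one_apply, hentry i j]
    congr 1
    simp only [Matrix.mul_apply, Matrix.replicateCol_apply, Matrix.replicateRow_apply, Finset.univ_unique,
      Finset.sum_singleton]
  rw [hfull, Matrix.det_one_add_replicateCol_mul_replicateRow] at hdet
  have hwu : (fun j : Fin (2 * n) =>
        if (j : ℕ) = n - 1 then (1 : ℂ) else if (j : ℕ) = 2 * n - 1 then -1 else 0) ⬝ᵥ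
      (fun i : Fin (2 * n) => (if (i : ℕ) = n - 1 then A ⟨n - 1, hn1⟩ ⟨n - 1, hn1⟩ - 1 else 0)
          + (if (i : ℕ) = 2 * n - 1 then 1 - A ⟨n - 1, hn1⟩ ⟨n - 1, hn1⟩ else 0))
      = 2 * (A ⟨n - 1, hn1⟩ ⟨n - 1, hn1⟩ - 1) := by
    simp only [dotProduct]
    have hterm : ∀ j : Fin (2 * n),
        (if (j : ℕ) = n - 1 then (1 : ℂ) else if (j : ℕ) = 2 * n - 1 then -1 else 0) *
          ((if (j : ℕ) = n - 1 then A ⟨n - 1, hn1⟩ ⟨n - 1, hn1⟩ - 1 else 0)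
            + (if (j : ℕ) = 2 * n - 1 then 1 - A ⟨n - 1, hn1⟩ ⟨n - 1, hn1⟩ else 0))
        = (if (j : ℕ) = n - 1 then A ⟨n - 1, hn1⟩ ⟨n - 1, hn1⟩ - 1 else 0)
          + (if (j : ℕ) = 2 * n - 1 then A ⟨n - 1, hn1⟩ ⟨n - 1, hn1⟩ - 1 else 0) := by
      intro j
      split_ifs <;> first | ring1 | (exfalso; omega)
    rw [Finset.sum_congr rfl (fun j _ => hterm j), Finset.sum_add_distrib,
      St14.sum_ind _ (n - 1) hn1, St14.sum_ind _ (2 * n - 1) h2n1]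
    ring
  rw [hwu] at hdet
  have hγ0 : A ⟨n - 1, hn1⟩ ⟨n - 1, hn1⟩ = 1 := by linear_combination hdet / 2
  -- conclude
  ext i j
  rw [hentry i j, hγ0, Matrix.one_apply]
  split_ifs <;> ring
end
end

section
/- Let x ∈ M_{2n+1}(ℂ) be the block matrix (with block sizes n, n, 1) x = [[J, Δ, 0],[0, −Jᵗ, e₁],[−e₁ᵗ, 0, 0]]. If X = [[A, B, 0],[C, −Aᵗ, 0],[0, 0, 0]] with A, B, C ∈ M_n(ℂ), Bᵗ = −B, Cᵗ = −C, and X commutes with x, then X = 0. That is, the centralizer of x in the subalgebra k of so(2n+1,ℂ) is zero. -/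
open Matrix

noncomputable section

private lemma sum_one' {N : ℕ} (f : Fin N → ℂ) (a : Fin N)
    (h : ∀ k, k ≠ a → f k = 0) : ∑ k, f k = f a :=
  Finset.sum_eq_single a (fun k _ hk => h k hk) (fun ha => absurd (Finset.mem_univ a) ha)

private lemma sum_two' {N : ℕ} (f : Fin N → ℂ) (a b : Fin N) (hab : a ≠ b)
    (h : ∀ k, k ≠ a → k ≠ b → f k = 0) : ∑ k, f k = f a + f b := by
  rw [← Finset.sum_pair hab]
  refine (Finset.sum_subset (Finset.subset_univ _) ?_).symm
  intro k _ hk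
  simp only [Finset.mem_insert, Finset.mem_singleton, not_or] at hk
  exact h k hk.1 hk.2


/-- The block matrix `[[A, B, 0], [C, -Aᵗ, 0], [0, 0, 0]] ∈ M_{2n+1}(ℂ)` (an element of the
subalgebra `k` of `so(2n+1, ℂ)` when `Bᵗ = -B` and `Cᵗ = -C`). -/
def kmat (n : ℕ) (A B C : Matrix (Fin n) (Fin n) ℂ) :
    Matrix (Fin (2 * n + 1)) (Fin (2 * n + 1)) ℂ :=
  Matrix.of fun i j =>
    if hi : (i : ℕ) < n then
      (if hj : (j : ℕ) < n then A ⟨i, hi⟩ ⟨j, hj⟩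
       else if hj2 : (j : ℕ) < 2 * n then B ⟨i, hi⟩ ⟨(j : ℕ) - n, by omega⟩
       else 0)
    else if hi2 : (i : ℕ) < 2 * n then
      (if hj : (j : ℕ) < n then C ⟨(i : ℕ) - n, by omega⟩ ⟨j, hj⟩
       else if hj2 : (j : ℕ) < 2 * n then
         -(A ⟨(j : ℕ) - n, by omega⟩ ⟨(i : ℕ) - n, by omega⟩)
       else 0)
    else 0

set_option maxHeartbeats 4000000 in
/-- If `X = [[A, B, 0], [C, -Aᵗ, 0], [0, 0, 0]]` with `Bᵗ = -B`,
`Cᵗ = -C` commutes with the element `x` of `so(2n+1, ℂ)` above, then `X = 0`: the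
centralizer of `x` in the subalgebra `k` is zero. -/
theorem statement15 (n : ℕ) (hn : 2 ≤ n)
    (A B C : Matrix (Fin n) (Fin n) ℂ) (hB : Bᵀ = -B) (hC : Cᵀ = -C)
    (hcomm : kmat n A B C * xEven n = xEven n * kmat n A B C) :
    kmat n A B C = 0 := by
  set M := kmat n A B C with hMdef
  have key : ∀ i j, (∑ k, M i k * xEven n k j) = ∑ k, xEven n i k * M k j := by
    intro i j
    rw [← Matrix.mul_apply, ← Matrix.mul_apply, hcomm]
  -- trivial zero column / row of M
  have hMcol2n : ∀ (k j : Fin (2*n+1)), (j:ℕ) = 2*n → M k j = 0 := by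
    intro k j hj
    have hk := k.isLt
    rw [hMdef]; unfold kmat
    simp only [Matrix.of_apply]
    split_ifs <;> first | rfl | (exfalso; omega)
  have hMrow2n : ∀ (i k : Fin (2*n+1)), (i:ℕ) = 2*n → M i k = 0 := by
    intro i k hi
    have hk := k.isLt
    rw [hMdef]; unfold kmat
    simp only [Matrix.of_apply]
    split_ifs <;> first | rfl | (exfalso; omega)
  -- the entry M_{n-1, 2n-1} is a diagonal entry of B, hence 0
  have hBdiag : ∀ (i j : Fin (2*n+1)), (i:ℕ) = n-1 → (j:ℕ) = 2*n-1 → M i j = 0 := by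
    intro i j hi hj
    rw [hMdef]; unfold kmat
    simp only [Matrix.of_apply]
    have h1 : (i:ℕ) < n := by omega
    have h2 : ¬ (j:ℕ) < n := by omega
    have h3 : (j:ℕ) < 2*n := by omega
    rw [dif_pos h1, dif_neg h2, dif_pos h3]
    have e : (⟨(j:ℕ) - n, by omega⟩ : Fin n) = ⟨(i:ℕ), h1⟩ := by
      apply Fin.val_injective; simp; omega
    rw [e]
    have hb : Bᵀ ⟨(i:ℕ), h1⟩ ⟨(i:ℕ), h1⟩ = (-B) ⟨(i:ℕ), h1⟩ ⟨(i:ℕ), h1⟩ := by rw [hB]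
    simp only [Matrix.transpose_apply, Matrix.neg_apply] at hb
    linear_combination hb / 2
  -- structure of columns of x
  have xc2n : ∀ (j k : Fin (2*n+1)), (j:ℕ) = 2*n →
      xEven n k j = if (k:ℕ) = n then 1 else 0 := by
    intro j k hj
    have hk := k.isLt
    unfold xEven; simp only [Matrix.of_apply]
    split_ifs <;> first | rfl | (exfalso; omega)
  have xcmid : ∀ (j k : Fin (2*n+1)), n ≤ (j:ℕ) → (j:ℕ) + 3 ≤ 2*n →
      xEven n k j = if (k:ℕ) = (j:ℕ)+1 then -1 else 0 := by
    intro j k hj1 hj2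
    have hk := k.isLt
    unfold xEven; simp only [Matrix.of_apply]
    split_ifs <;> first | rfl | (exfalso; omega)
  have xc2n2 : ∀ (j k : Fin (2*n+1)), (j:ℕ) = 2*n-2 →
      xEven n k j = if (k:ℕ) = n-1 then -1 else if (k:ℕ) = 2*n-1 then -1 else 0 := by
    intro j k hj
    have hk := k.isLt
    unfold xEven; simp only [Matrix.of_apply]
    split_ifs <;> first | rfl | (exfalso; omega)
  have xcn1 : ∀ (j k : Fin (2*n+1)), (j:ℕ) = n-1 →
      xEven n k j = if (k:ℕ) = n-2 then 1 else 0 := by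
    intro j k hj
    have hk := k.isLt
    unfold xEven; simp only [Matrix.of_apply]
    split_ifs <;> first | rfl | (exfalso; omega)
  have xc2n1 : ∀ (j k : Fin (2*n+1)), (j:ℕ) = 2*n-1 →
      xEven n k j = if (k:ℕ) = n-2 then 1 else 0 := by
    intro j k hj
    have hk := k.isLt
    unfold xEven; simp only [Matrix.of_apply]
    split_ifs <;> first | rfl | (exfalso; omega)
  have xclow : ∀ (j k : Fin (2*n+1)), 1 ≤ (j:ℕ) → (j:ℕ) + 2 ≤ n →
      xEven n k j = if (k:ℕ) = (j:ℕ)-1 then 1 else 0 := by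
    intro j k hj1 hj2
    have hk := k.isLt
    unfold xEven; simp only [Matrix.of_apply]
    split_ifs <;> first | rfl | (exfalso; omega)
  -- structure of rows of x
  have xr2n : ∀ (i k : Fin (2*n+1)), (i:ℕ) = 2*n →
      xEven n i k = if (k:ℕ) = 0 then -1 else 0 := by
    intro i k hi
    have hk := k.isLt
    unfold xEven; simp only [Matrix.of_apply]
    split_ifs <;> first | rfl | (exfalso; omega)
  have xrlow : ∀ (i k : Fin (2*n+1)), (i:ℕ) + 3 ≤ n →
      xEven n i k = if (k:ℕ) = (i:ℕ)+1 then 1 else 0 := by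
    intro i k hi
    have hk := k.isLt
    unfold xEven; simp only [Matrix.of_apply]
    split_ifs <;> first | rfl | (exfalso; omega)
  have xrn2 : ∀ (i k : Fin (2*n+1)), (i:ℕ) = n-2 →
      xEven n i k = if (k:ℕ) = n-1 then 1 else if (k:ℕ) = 2*n-1 then 1 else 0 := by
    intro i k hi
    have hk := k.isLt
    unfold xEven; simp only [Matrix.of_apply]
    split_ifs <;> first | rfl | (exfalso; omega)
  have xrn1 : ∀ (i k : Fin (2*n+1)), (i:ℕ) = n-1 →
      xEven n i k = if (k:ℕ) = 2*n-2 then -1 else 0 := by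
    intro i k hi
    have hk := k.isLt
    unfold xEven; simp only [Matrix.of_apply]
    split_ifs <;> first | rfl | (exfalso; omega)
  have xr2n1 : ∀ (i k : Fin (2*n+1)), (i:ℕ) = 2*n-1 →
      xEven n i k = if (k:ℕ) = 2*n-2 then -1 else 0 := by
    intro i k hi
    have hk := k.isLt
    unfold xEven; simp only [Matrix.of_apply]
    split_ifs <;> first | rfl | (exfalso; omega)
  have xrmid : ∀ (i k : Fin (2*n+1)), n+1 ≤ (i:ℕ) → (i:ℕ) + 2 ≤ 2*n →
      xEven n i k = if (k:ℕ) = (i:ℕ)-1 then -1 else 0 := by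
    intro i k hi1 hi2
    have hk := k.isLt
    unfold xEven; simp only [Matrix.of_apply]
    split_ifs <;> first | rfl | (exfalso; omega)
  -- generic column steps
  have colstep : ∀ (j a : Fin (2*n+1)) (c : ℂ), c ≠ 0 →
      (∀ k, xEven n k j = if (k:ℕ) = (a:ℕ) then c else 0) →
      (∀ k, M k j = 0) → ∀ i, M i a = 0 := by
    intro j a c hc hx hMj i
    have h := key i j
    rw [Finset.sum_eq_zero (f := fun k => xEven n i k * M k j) (fun k _ => by
      show xEven n i k * M k j = 0
      rw [hMj k, mul_zero])] at h
    rw [sum_one' (fun k => M i k * xEven n k j) a (fun k hk => by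
      show M i k * xEven n k j = 0
      rw [hx k, if_neg (fun hh => hk (Fin.val_injective hh)), mul_zero])] at h
    have e : M i a * xEven n a j = M i a * c := by rw [hx a, if_pos rfl]
    have h2 : M i a * c = 0 := by rw [← e]; exact h
    rcases mul_eq_zero.mp h2 with h' | h'
    · exact h'
    · exact absurd h' hc
  have colstep2 : ∀ (j a b : Fin (2*n+1)) (c d : ℂ), (a:ℕ) ≠ (b:ℕ) →
      (∀ k, xEven n k j = if (k:ℕ) = (a:ℕ) then c else if (k:ℕ) = (b:ℕ) then d else 0) →
      (∀ k, M k j = 0) → ∀ i, c * M i a + d * M i b = 0 := by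
    intro j a b c d hab hx hMj i
    have h := key i j
    rw [Finset.sum_eq_zero (f := fun k => xEven n i k * M k j) (fun k _ => by
      show xEven n i k * M k j = 0
      rw [hMj k, mul_zero])] at h
    rw [sum_two' (fun k => M i k * xEven n k j) a b (fun hh => hab (congrArg Fin.val hh))
      (fun k hk1 hk2 => by
        show M i k * xEven n k j = 0
        rw [hx k, if_neg (fun hh => hk1 (Fin.val_injective hh)),
          if_neg (fun hh => hk2 (Fin.val_injective hh)), mul_zero])] at h
    have e1 : M i a * xEven n a j = M i a * c := by rw [hx a, if_pos rfl]
    have e2 : M i b * xEven n b j = M i b * d := by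
      rw [hx b, if_neg (Ne.symm hab), if_pos rfl]
    have h2 : M i a * c + M i b * d = 0 := by rw [← e1, ← e2]; exact h
    linear_combination h2
  have colpairstep : ∀ (j1 j2 a : Fin (2*n+1)) (c : ℂ), c ≠ 0 →
      (∀ k, xEven n k j1 = if (k:ℕ) = (a:ℕ) then c else 0) →
      (∀ k, xEven n k j2 = if (k:ℕ) = (a:ℕ) then c else 0) →
      (∀ k, M k j1 + M k j2 = 0) → ∀ i, M i a = 0 := by
    intro j1 j2 a c hc hx1 hx2 hp i
    have h1 := key i j1
    have h2 := key i j2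
    rw [sum_one' (fun k => M i k * xEven n k j1) a (fun k hk => by
      show M i k * xEven n k j1 = 0
      rw [hx1 k, if_neg (fun hh => hk (Fin.val_injective hh)), mul_zero])] at h1
    rw [sum_one' (fun k => M i k * xEven n k j2) a (fun k hk => by
      show M i k * xEven n k j2 = 0
      rw [hx2 k, if_neg (fun hh => hk (Fin.val_injective hh)), mul_zero])] at h2
    have e1 : M i a * xEven n a j1 = M i a * c := by rw [hx1 a, if_pos rfl]
    have e2 : M i a * xEven n a j2 = M i a * c := by rw [hx2 a, if_pos rfl]
    have h3 : (∑ k, xEven n i k * M k j1) + ∑ k, xEven n i k * M k j2 = 0 := by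
      rw [← Finset.sum_add_distrib]
      apply Finset.sum_eq_zero
      intro k _
      have hpk := hp k
      linear_combination xEven n i k * hpk
    rw [← h1, ← h2] at h3
    have h1' : M i a * xEven n a j1 + M i a * xEven n a j2 = 0 := h3
    rw [e1, e2] at h1'
    have h4 : c * (M i a + M i a) = 0 := by linear_combination h1'
    rcases mul_eq_zero.mp h4 with h' | h'
    · exact absurd h' hc
    · exact add_self_eq_zero.mp h'
  -- generic row steps
  have rowstep : ∀ (i a : Fin (2*n+1)) (c : ℂ), c ≠ 0 →
      (∀ k, xEven n i k = if (k:ℕ) = (a:ℕ) then c else 0) →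
      (∀ k, M i k = 0) → ∀ j, M a j = 0 := by
    intro i a c hc hx hMi j
    have h := (key i j).symm
    rw [Finset.sum_eq_zero (f := fun k => M i k * xEven n k j) (fun k _ => by
      show M i k * xEven n k j = 0
      rw [hMi k, zero_mul])] at h
    rw [sum_one' (fun k => xEven n i k * M k j) a (fun k hk => by
      show xEven n i k * M k j = 0
      rw [hx k, if_neg (fun hh => hk (Fin.val_injective hh)), zero_mul])] at h
    have e : xEven n i a * M a j = c * M a j := by rw [hx a, if_pos rfl]
    have h2 : c * M a j = 0 := by rw [← e]; exact h
    rcases mul_eq_zero.mp h2 with h' | h'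
    · exact absurd h' hc
    · exact h'
  have rowstep2 : ∀ (i a b : Fin (2*n+1)) (c d : ℂ), (a:ℕ) ≠ (b:ℕ) →
      (∀ k, xEven n i k = if (k:ℕ) = (a:ℕ) then c else if (k:ℕ) = (b:ℕ) then d else 0) →
      (∀ k, M i k = 0) → ∀ j, c * M a j + d * M b j = 0 := by
    intro i a b c d hab hx hMi j
    have h := (key i j).symm
    rw [Finset.sum_eq_zero (f := fun k => M i k * xEven n k j) (fun k _ => by
      show M i k * xEven n k j = 0
      rw [hMi k, zero_mul])] at h
    rw [sum_two' (fun k => xEven n i k * M k j) a b (fun hh => hab (congrArg Fin.val hh))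
      (fun k hk1 hk2 => by
        show xEven n i k * M k j = 0
        rw [hx k, if_neg (fun hh => hk1 (Fin.val_injective hh)),
          if_neg (fun hh => hk2 (Fin.val_injective hh)), zero_mul])] at h
    have e1 : xEven n i a * M a j = c * M a j := by rw [hx a, if_pos rfl]
    have e2 : xEven n i b * M b j = d * M b j := by
      rw [hx b, if_neg (Ne.symm hab), if_pos rfl]
    have h2 : c * M a j + d * M b j = 0 := by rw [← e1, ← e2]; exact h
    exact h2
  have rowpairstep : ∀ (i1 i2 a : Fin (2*n+1)) (c : ℂ), c ≠ 0 →
      (∀ k, xEven n i1 k = if (k:ℕ) = (a:ℕ) then c else 0) →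
      (∀ k, xEven n i2 k = if (k:ℕ) = (a:ℕ) then c else 0) →
      (∀ k, M i1 k + M i2 k = 0) → ∀ j, M a j = 0 := by
    intro i1 i2 a c hc hx1 hx2 hp j
    have h1 := key i1 j
    have h2 := key i2 j
    rw [sum_one' (fun k => xEven n i1 k * M k j) a (fun k hk => by
      show xEven n i1 k * M k j = 0
      rw [hx1 k, if_neg (fun hh => hk (Fin.val_injective hh)), zero_mul])] at h1
    rw [sum_one' (fun k => xEven n i2 k * M k j) a (fun k hk => by
      show xEven n i2 k * M k j = 0
      rw [hx2 k, if_neg (fun hh => hk (Fin.val_injective hh)), zero_mul])] at h2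
    have e1 : xEven n i1 a * M a j = c * M a j := by rw [hx1 a, if_pos rfl]
    have e2 : xEven n i2 a * M a j = c * M a j := by rw [hx2 a, if_pos rfl]
    have h3 : (∑ k, M i1 k * xEven n k j) + ∑ k, M i2 k * xEven n k j = 0 := by
      rw [← Finset.sum_add_distrib]
      apply Finset.sum_eq_zero
      intro k _
      have hpk := hp k
      linear_combination xEven n k j * hpk
    rw [h1, h2] at h3
    have h1' : xEven n i1 a * M a j + xEven n i2 a * M a j = 0 := h3
    rw [e1, e2] at h1'
    have h4 : c * (M a j + M a j) = 0 := by linear_combination h1'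
    rcases mul_eq_zero.mp h4 with h' | h'
    · exact absurd h' hc
    · exact add_self_eq_zero.mp h'
  -- columns n .. 2n-2 vanish
  have coln : ∀ (j : Fin (2*n+1)), (j:ℕ) = n → ∀ i, M i j = 0 := by
    intro j hj
    refine colstep ⟨2*n, by omega⟩ j 1 one_ne_zero ?_ ?_
    · intro k; simp only [hj]; exact xc2n ⟨2*n, by omega⟩ k rfl
    · intro k; exact hMcol2n k ⟨2*n, by omega⟩ rfl
  have colZhigh : ∀ m, m ≤ n-2 → ∀ (j : Fin (2*n+1)), (j:ℕ) = n + m → ∀ i, M i j = 0 := by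
    intro m
    induction m with
    | zero => intro _ j hj; exact coln j (by omega)
    | succ p ih =>
      intro hm j hj
      have hprev : ∀ k, M k (⟨n+p, by omega⟩ : Fin (2*n+1)) = 0 :=
        fun k => ih (by omega) ⟨n+p, by omega⟩ rfl k
      refine colstep ⟨n+p, by omega⟩ j (-1) (neg_ne_zero.mpr one_ne_zero) ?_ hprev
      intro k
      have hx := xcmid ⟨n+p, by omega⟩ k (by exact Nat.le_add_right n p)
        (show n+p+3 ≤ 2*n by omega)
      simp only [hj]
      exact hx
  -- the pair relation between columns n-1 and 2n-1
  have colPair : ∀ (i j j' : Fin (2*n+1)), (j:ℕ) = n-1 → (j':ℕ) = 2*n-1 →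
      M i j + M i j' = 0 := by
    intro i j j' hj hj'
    have h := colstep2 ⟨2*n-2, by omega⟩ j j' (-1) (-1) (by omega)
      (fun k => by simp only [hj, hj']; exact xc2n2 ⟨2*n-2, by omega⟩ k rfl)
      (fun k => colZhigh (n-2) le_rfl ⟨2*n-2, by omega⟩ (show 2*n-2 = n + (n-2) by omega) k) i
    linear_combination -h
  -- columns 0 .. n-2 vanish
  have coln2 : ∀ (j : Fin (2*n+1)), (j:ℕ) = n-2 → ∀ i, M i j = 0 := by
    intro j hj
    refine colpairstep ⟨n-1, by omega⟩ ⟨2*n-1, by omega⟩ j 1 one_ne_zero ?_ ?_ ?_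
    · intro k; simp only [hj]; exact xcn1 ⟨n-1, by omega⟩ k rfl
    · intro k; simp only [hj]; exact xc2n1 ⟨2*n-1, by omega⟩ k rfl
    · intro k; exact colPair k ⟨n-1, by omega⟩ ⟨2*n-1, by omega⟩ rfl rfl
  have colZlow : ∀ m, m ≤ n-2 → ∀ (j : Fin (2*n+1)), (j:ℕ) = n-2-m → ∀ i, M i j = 0 := by
    intro m
    induction m with
    | zero => intro _ j hj; exact coln2 j (by omega)
    | succ p ih =>
      intro hm j hj
      have hprev : ∀ k, M k (⟨n-2-p, by omega⟩ : Fin (2*n+1)) = 0 :=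
        fun k => ih (by omega) ⟨n-2-p, by omega⟩ rfl k
      refine colstep ⟨n-2-p, by omega⟩ j 1 one_ne_zero ?_ hprev
      intro k
      have hx := xclow ⟨n-2-p, by omega⟩ k (show 1 ≤ n-2-p by omega)
        (show n-2-p+2 ≤ n by omega)
      simp only [hj]
      exact hx
  -- rows 0 .. n-2 vanish
  have row0 : ∀ (i : Fin (2*n+1)), (i:ℕ) = 0 → ∀ j, M i j = 0 := by
    intro i hi
    refine rowstep ⟨2*n, by omega⟩ i (-1) (neg_ne_zero.mpr one_ne_zero) ?_ ?_
    · intro k; simp only [hi]; exact xr2n ⟨2*n, by omega⟩ k rfl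
    · intro k; exact hMrow2n ⟨2*n, by omega⟩ k rfl
  have rowZlow : ∀ m, m ≤ n-2 → ∀ (i : Fin (2*n+1)), (i:ℕ) = m → ∀ j, M i j = 0 := by
    intro m
    induction m with
    | zero => intro _ i hi; exact row0 i hi
    | succ p ih =>
      intro hm i hi
      have hprev : ∀ k, M (⟨p, by omega⟩ : Fin (2*n+1)) k = 0 :=
        fun k => ih (by omega) ⟨p, by omega⟩ rfl k
      refine rowstep ⟨p, by omega⟩ i 1 one_ne_zero ?_ hprev
      intro k
      have hx := xrlow ⟨p, by omega⟩ k (show p+3 ≤ n by omega)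
      simp only [hi]
      exact hx
  -- the pair relation between rows n-1 and 2n-1
  have rowPair : ∀ (i i' j : Fin (2*n+1)), (i:ℕ) = n-1 → (i':ℕ) = 2*n-1 →
      M i j + M i' j = 0 := by
    intro i i' j hi hi'
    have h := rowstep2 ⟨n-2, by omega⟩ i i' 1 1 (by omega)
      (fun k => by simp only [hi, hi']; exact xrn2 ⟨n-2, by omega⟩ k rfl)
      (fun k => rowZlow (n-2) le_rfl ⟨n-2, by omega⟩ rfl k) j
    linear_combination h
  -- rows n .. 2n-2 vanish
  have rown2 : ∀ (i : Fin (2*n+1)), (i:ℕ) = 2*n-2 → ∀ j, M i j = 0 := by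
    intro i hi
    refine rowpairstep ⟨n-1, by omega⟩ ⟨2*n-1, by omega⟩ i (-1)
      (neg_ne_zero.mpr one_ne_zero) ?_ ?_ ?_
    · intro k; simp only [hi]; exact xrn1 ⟨n-1, by omega⟩ k rfl
    · intro k; simp only [hi]; exact xr2n1 ⟨2*n-1, by omega⟩ k rfl
    · intro k; exact rowPair ⟨n-1, by omega⟩ ⟨2*n-1, by omega⟩ k rfl rfl
  have rowZhigh : ∀ m, m ≤ n-2 → ∀ (i : Fin (2*n+1)), (i:ℕ) = 2*n-2-m → ∀ j, M i j = 0 := by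
    intro m
    induction m with
    | zero => intro _ i hi; exact rown2 i (by omega)
    | succ p ih =>
      intro hm i hi
      have hprev : ∀ k, M (⟨2*n-2-p, by omega⟩ : Fin (2*n+1)) k = 0 :=
        fun k => ih (by omega) ⟨2*n-2-p, by omega⟩ rfl k
      refine rowstep ⟨2*n-2-p, by omega⟩ i (-1) (neg_ne_zero.mpr one_ne_zero) ?_ hprev
      intro k
      have hx := xrmid ⟨2*n-2-p, by omega⟩ k (show n+1 ≤ 2*n-2-p by omega)
        (show 2*n-2-p+2 ≤ 2*n by omega)
      simp only [hi]
      exact hx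
  -- the four corner entries
  have hE11 : ∀ (i j : Fin (2*n+1)), (i:ℕ) = n-1 → (j:ℕ) = n-1 → M i j = 0 := by
    intro i j hi hj
    have h := colPair i j ⟨2*n-1, by omega⟩ hj rfl
    have h2 := hBdiag i ⟨2*n-1, by omega⟩ hi rfl
    linear_combination h - h2
  have hE21 : ∀ (i j : Fin (2*n+1)), (i:ℕ) = 2*n-1 → (j:ℕ) = n-1 → M i j = 0 := by
    intro i j hi hj
    have h := rowPair ⟨n-1, by omega⟩ i j rfl hi
    have h2 := hE11 ⟨n-1, by omega⟩ j rfl hj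
    linear_combination h - h2
  have hE22 : ∀ (i j : Fin (2*n+1)), (i:ℕ) = 2*n-1 → (j:ℕ) = 2*n-1 → M i j = 0 := by
    intro i j hi hj
    have h := colPair i ⟨n-1, by omega⟩ j rfl hj
    have h2 := hE21 i ⟨n-1, by omega⟩ hi rfl
    linear_combination h - h2
  -- conclusion
  ext i j
  simp only [Matrix.zero_apply]
  have hi := i.isLt
  have hj := j.isLt
  by_cases hj1 : (j:ℕ) = n-1
  · by_cases hi1 : (i:ℕ) = n-1
    · exact hE11 i j hi1 hj1
    · by_cases hi2 : (i:ℕ) = 2*n-1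
      · exact hE21 i j hi2 hj1
      · by_cases hi3 : (i:ℕ) = 2*n
        · exact hMrow2n i j hi3
        · by_cases hi4 : (i:ℕ) ≤ n-2
          · exact rowZlow (i:ℕ) (by omega) i rfl j
          · exact rowZhigh (2*n-2-(i:ℕ)) (by omega) i (by omega) j
  · by_cases hj2 : (j:ℕ) = 2*n-1
    · by_cases hi1 : (i:ℕ) = n-1
      · exact hBdiag i j hi1 hj2
      · by_cases hi2 : (i:ℕ) = 2*n-1
        · exact hE22 i j hi2 hj2
        · by_cases hi3 : (i:ℕ) = 2*n
          · exact hMrow2n i j hi3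
          · by_cases hi4 : (i:ℕ) ≤ n-2
            · exact rowZlow (i:ℕ) (by omega) i rfl j
            · exact rowZhigh (2*n-2-(i:ℕ)) (by omega) i (by omega) j
    · by_cases hj3 : (j:ℕ) = 2*n
      · exact hMcol2n i j hj3
      · by_cases hj4 : (j:ℕ) ≤ n-2
        · exact colZlow (n-2-(j:ℕ)) (by omega) j (by omega) i
        · exact colZhigh ((j:ℕ)-n) (by omega) j (by omega) i

end
end
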